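/- Let (U_ℓ)_{ℓ ∈ ℕ} be an i.i.d. sequence of strictly positive real random variables with E[U₁] < ∞ and E[|log U₁|] < ∞. Let m ≥ 1 and k ≥ 1 be integers, and write k = m⌊k/m⌋ + r with r ∈ {0, 1, …, m − 1}. Then E[log( k^{-1} Σ_{ℓ=1}^k U_ℓ )] ≥ (m⌊k/m⌋/k) · E[log( m^{-1} Σ_{ℓ=1}^m U_ℓ )] + (r/k) · E[log U₁]. -/

import Mathlib

open MeasureTheory ProbabilityTheory

section BlockAux

variable {Ω : Type*} [MeasurableSpace Ω]

lemma blockaux_sum_range_mul {M : Type*} [AddCommMonoid M] (f : ℕ → M) (m q : ℕ) :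
    ∑ ℓ ∈ Finset.range (m * q), f ℓ
      = ∑ j ∈ Finset.range q, ∑ i ∈ Finset.range m, f (m * j + i) := by
  induction q with
  | zero => simp
  | succ q ih =>
    rw [Nat.mul_succ, Finset.sum_range_add, ih, Finset.sum_range_succ]

lemma blockaux_integral_comp_eq {P : Measure Ω}
    {g h : Ω → ℝ} (hg : Measurable g) (hh : Measurable h) (heq : P.map g = P.map h)
    (φ : ℝ → ℝ) (hφ : Measurable φ) :
    ∫ ω, φ (g ω) ∂P = ∫ ω, φ (h ω) ∂P := by
  rw [← integral_map hg.aemeasurable hφ.aestronglyMeasurable,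
    ← integral_map hh.aemeasurable hφ.aestronglyMeasurable, heq]

lemma blockaux_integrable_comp {P : Measure Ω}
    {g h : Ω → ℝ} (hg : Measurable g) (hh : Measurable h) (heq : P.map g = P.map h)
    (φ : ℝ → ℝ) (hφ : Measurable φ) (hint : Integrable (fun ω => φ (h ω)) P) :
    Integrable (fun ω => φ (g ω)) P := by
  have h1 : Integrable φ (P.map h) :=
    (integrable_map_measure hφ.aestronglyMeasurable hh.aemeasurable).mpr hint
  have h2 : Integrable φ (P.map g) := heq ▸ h1
  exact (integrable_map_measure hφ.aestronglyMeasurable hg.aemeasurable).mp h2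

lemma blockaux_map_tuple_eq_pi (P : Measure Ω) [IsProbabilityMeasure P]
    (U : ℕ → Ω → ℝ) (hUmeas : ∀ k, Measurable (U k))
    (hindep : iIndepFun U P)
    (n : ℕ) (g : Fin n → ℕ) (hg : Function.Injective g) :
    P.map (fun ω (i : Fin n) => U (g i) ω) = Measure.pi (fun i => P.map (U (g i))) := by
  classical
  have hT : Measurable (fun ω (i : Fin n) => U (g i) ω) :=
    measurable_pi_lambda _ fun i => hUmeas (g i)
  refine (Measure.pi_eq fun s hs => ?_).symm
  rw [Measure.map_apply hT (MeasurableSet.univ_pi hs)]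
  set sets : ℕ → Set ℝ := Function.extend g s (fun _ => Set.univ) with hsets
  have hext : ∀ i : Fin n, sets (g i) = s i := fun i => hg.extend_apply _ _ i
  have hpre : (fun ω (i : Fin n) => U (g i) ω) ⁻¹' (Set.pi Set.univ s)
      = ⋂ ℓ ∈ Finset.image g Finset.univ, U ℓ ⁻¹' sets ℓ := by
    ext ω
    simp only [Set.mem_preimage, Set.mem_pi, Set.mem_univ, true_implies, Set.mem_iInter,
      Finset.mem_image, Finset.mem_univ, true_and]
    constructor
    · rintro H ℓ ⟨i, rfl⟩
      rw [hext]; exact H i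
    · intro H i
      have := H (g i) ⟨i, rfl⟩
      rwa [hext] at this
  rw [hpre, hindep.measure_inter_preimage_eq_mul (Finset.image g Finset.univ)
    (sets := sets) (fun ℓ hℓ => by
      obtain ⟨i, _, rfl⟩ := Finset.mem_image.mp hℓ
      rw [hext]; exact hs i)]
  rw [Finset.prod_image (fun a _ b _ hab => hg hab)]
  refine Finset.prod_congr rfl fun i _ => ?_
  rw [hext, Measure.map_apply (hUmeas (g i)) (hs i)]

lemma blockaux_integrable_log_avg (P : Measure Ω) [IsProbabilityMeasure P]
    (n : ℕ) (hn : 1 ≤ n) (f : ℕ → Ω → ℝ) (hmeas : ∀ i, Measurable (f i))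
    (hpos : ∀ i ω, 0 < f i ω) (hint : ∀ i, Integrable (f i) P)
    (hlog : Integrable (fun ω => Real.log (f 0 ω)) P) :
    Integrable (fun ω => Real.log ((n : ℝ)⁻¹ * ∑ ℓ ∈ Finset.range n, f ℓ ω)) P := by
  have hne : (Finset.range n).Nonempty := Finset.nonempty_range_iff.mpr (by omega)
  have hS : ∀ ω, 0 < ∑ ℓ ∈ Finset.range n, f ℓ ω := fun ω =>
    Finset.sum_pos (fun i _ => hpos i ω) hne
  have hn1 : (1 : ℝ) ≤ (n : ℝ) := by exact_mod_cast hn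
  have hnpos : (0 : ℝ) < (n : ℝ) := by linarith
  have hmeasS : Measurable fun ω => (n : ℝ)⁻¹ * ∑ ℓ ∈ Finset.range n, f ℓ ω :=
    (Finset.measurable_sum _ fun i _ => hmeas i).const_mul _
  have hgint : Integrable
      (fun ω => (∑ ℓ ∈ Finset.range n, f ℓ ω) + |Real.log (f 0 ω)| + Real.log n) P :=
    ((integrable_finset_sum _ fun i _ => hint i).add hlog.abs).add (integrable_const _)
  refine hgint.mono' (Real.measurable_log.comp hmeasS).aestronglyMeasurable
    (Filter.Eventually.of_forall fun ω => ?_)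
  have hSpos := hS ω
  have havgpos : 0 < (n : ℝ)⁻¹ * ∑ ℓ ∈ Finset.range n, f ℓ ω :=
    mul_pos (by positivity) hSpos
  have hlogn : 0 ≤ Real.log n := Real.log_nonneg hn1
  rw [Real.norm_eq_abs, abs_le]
  constructor
  · -- lower bound
    have h0mem : (0 : ℕ) ∈ Finset.range n := Finset.mem_range.mpr (by omega)
    have hf0le : f 0 ω ≤ ∑ ℓ ∈ Finset.range n, f ℓ ω :=
      Finset.single_le_sum (fun i _ => (hpos i ω).le) h0mem
    have : Real.log ((n : ℝ)⁻¹ * ∑ ℓ ∈ Finset.range n, f ℓ ω)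
        = -Real.log n + Real.log (∑ ℓ ∈ Finset.range n, f ℓ ω) := by
      rw [Real.log_mul (by positivity) (ne_of_gt hSpos), Real.log_inv]
    rw [this]
    have h1 : Real.log (f 0 ω) ≤ Real.log (∑ ℓ ∈ Finset.range n, f ℓ ω) :=
      Real.log_le_log (hpos 0 ω) hf0le
    have h2 : -|Real.log (f 0 ω)| ≤ Real.log (f 0 ω) := neg_abs_le _
    linarith
  · -- upper bound
    have h1 : Real.log ((n : ℝ)⁻¹ * ∑ ℓ ∈ Finset.range n, f ℓ ω)
        ≤ (n : ℝ)⁻¹ * (∑ ℓ ∈ Finset.range n, f ℓ ω) - 1 :=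
      Real.log_le_sub_one_of_pos havgpos
    have h2 : (n : ℝ)⁻¹ * (∑ ℓ ∈ Finset.range n, f ℓ ω) ≤ ∑ ℓ ∈ Finset.range n, f ℓ ω := by
      have : (n : ℝ)⁻¹ ≤ 1 := by
        rw [inv_le_one_iff₀]; right; exact hn1
      nlinarith
    have h3 : 0 ≤ |Real.log (f 0 ω)| := abs_nonneg _
    linarith

end BlockAux

/-- Block lower bound for the expected log of an average of i.i.d. positive variables:
with `k = m⌊k/m⌋ + r`, `r = k % m`,
`E[log(k⁻¹ Σ_{ℓ=1}^k U_ℓ)] ≥ (m⌊k/m⌋/k) E[log(m⁻¹ Σ_{ℓ=1}^m U_ℓ)] + (r/k) E[log U₁]`. -/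
theorem integral_log_avg_block_lower_bound
    {Ω : Type*} [MeasurableSpace Ω] (P : Measure Ω) [IsProbabilityMeasure P]
    (U : ℕ → Ω → ℝ) (hUmeas : ∀ k, Measurable (U k))
    (hindep : iIndepFun U P)
    (hident : ∀ k, P.map (U k) = P.map (U 0))
    (hUpos : ∀ k ω, 0 < U k ω)
    (hUint : Integrable (U 0) P)
    (hlogint : Integrable (fun ω => |Real.log (U 0 ω)|) P)
    (m k : ℕ) (hm : 1 ≤ m) (hk : 1 ≤ k) :
    ((m * (k / m) : ℕ) : ℝ) / (k : ℝ)
          * (∫ ω, Real.log ((m : ℝ)⁻¹ * ∑ ℓ ∈ Finset.range m, U ℓ ω) ∂P)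
        + ((k % m : ℕ) : ℝ) / (k : ℝ) * (∫ ω, Real.log (U 0 ω) ∂P)
      ≤ ∫ ω, Real.log ((k : ℝ)⁻¹ * ∑ ℓ ∈ Finset.range k, U ℓ ω) ∂P := by
  classical
  set q := k / m with hq
  set r := k % m with hr
  have hqr : m * q + r = k := Nat.div_add_mod k m
  have hkpos : (0 : ℝ) < (k : ℝ) := by exact_mod_cast hk
  have hmpos : (0 : ℝ) < (m : ℝ) := by exact_mod_cast hm
  -- basic transfers
  have hUint' : ∀ ℓ, Integrable (U ℓ) P := fun ℓ =>
    blockaux_integrable_comp (hUmeas ℓ) (hUmeas 0) (hident ℓ) id measurable_id hUint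
  have hlog0 : Integrable (fun ω => Real.log (U 0 ω)) P := by
    have hm0 : AEStronglyMeasurable (fun ω => Real.log (U 0 ω)) P :=
      (Real.measurable_log.comp (hUmeas 0)).aestronglyMeasurable
    have := (integrable_norm_iff hm0).mp (by simpa [Real.norm_eq_abs] using hlogint)
    exact this
  have hlogℓ : ∀ ℓ, Integrable (fun ω => Real.log (U ℓ ω)) P := fun ℓ =>
    blockaux_integrable_comp (hUmeas ℓ) (hUmeas 0) (hident ℓ) Real.log Real.measurable_log hlog0
  have hElog : ∀ ℓ, ∫ ω, Real.log (U ℓ ω) ∂P = ∫ ω, Real.log (U 0 ω) ∂P := fun ℓ =>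
    blockaux_integral_comp_eq (hUmeas ℓ) (hUmeas 0) (hident ℓ) Real.log Real.measurable_log
  -- block distribution equality
  set μ := P.map (U 0) with hμ
  have hblockmap : ∀ g : Fin m → ℕ, Function.Injective g →
      P.map (fun ω (i : Fin m) => U (g i) ω) = Measure.pi (fun _ : Fin m => μ) := by
    intro g hg
    rw [blockaux_map_tuple_eq_pi P U hUmeas hindep m g hg]
    congr 1
    funext i
    exact hident (g i)
  have hφmeas : Measurable (fun x : Fin m → ℝ => Real.log ((m : ℝ)⁻¹ * ∑ i : Fin m, x i)) :=
    Real.measurable_log.comp ((Finset.measurable_sum _ fun i _ => measurable_pi_apply i).const_mul _)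
  have e1 : ∀ g : Fin m → ℕ, Function.Injective g →
      ∫ ω, Real.log ((m : ℝ)⁻¹ * ∑ i : Fin m, U (g i) ω) ∂P
        = ∫ x, Real.log ((m : ℝ)⁻¹ * ∑ i : Fin m, x i) ∂(Measure.pi fun _ : Fin m => μ) := by
    intro g hg
    have hT : Measurable (fun ω (i : Fin m) => U (g i) ω) :=
      measurable_pi_lambda _ fun i => hUmeas (g i)
    rw [← hblockmap g hg, integral_map hT.aemeasurable hφmeas.aestronglyMeasurable]
  have hblockInt : ∀ j : ℕ,
      ∫ ω, Real.log ((m : ℝ)⁻¹ * ∑ ℓ ∈ Finset.range m, U (m * j + ℓ) ω) ∂P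
        = ∫ ω, Real.log ((m : ℝ)⁻¹ * ∑ ℓ ∈ Finset.range m, U ℓ ω) ∂P := by
    intro j
    have hinj1 : Function.Injective (fun i : Fin m => m * j + (i : ℕ)) := by
      intro a b hab
      simp only [add_right_injective] at hab
      exact Fin.val_injective (by omega)
    have hinj2 : Function.Injective (fun i : Fin m => (i : ℕ)) := Fin.val_injective
    have t1 := e1 (fun i : Fin m => m * j + (i : ℕ)) hinj1
    have t2 := e1 (fun i : Fin m => (i : ℕ)) hinj2
    have s1 : ∀ ω : Ω, ∑ i : Fin m, U (m * j + (i : ℕ)) ω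
        = ∑ ℓ ∈ Finset.range m, U (m * j + ℓ) ω :=
      fun ω => Fin.sum_univ_eq_sum_range (fun ℓ => U (m * j + ℓ) ω) m
    have s2 : ∀ ω : Ω, ∑ i : Fin m, U ((i : ℕ)) ω = ∑ ℓ ∈ Finset.range m, U ℓ ω :=
      fun ω => Fin.sum_univ_eq_sum_range (fun ℓ => U ℓ ω) m
    simp only [s1] at t1
    simp only [s2] at t2
    rw [t1, ← t2]
  -- integrability of block logs
  have hblockIntble : ∀ j : ℕ,
      Integrable (fun ω => Real.log ((m : ℝ)⁻¹ * ∑ ℓ ∈ Finset.range m, U (m * j + ℓ) ω)) P := by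
    intro j
    exact blockaux_integrable_log_avg P m hm (fun ℓ => U (m * j + ℓ))
      (fun ℓ => hUmeas _) (fun ℓ ω => hUpos _ ω) (fun ℓ => hUint' _) (hlogℓ (m * j + 0))
  -- the functions appearing in the Jensen decomposition
  set B : ℕ → Ω → ℝ := fun i ω =>
    if i < q then (m : ℝ)⁻¹ * ∑ ℓ ∈ Finset.range m, U (m * i + ℓ) ω
    else U (m * q + (i - q)) ω with hB
  set w : ℕ → ℝ := fun i => if i < q then (m : ℝ) / k else 1 / k with hw
  -- pointwise Jensen
  have hpoint : ∀ ω, ∑ i ∈ Finset.range (q + r), w i * Real.log (B i ω)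
      ≤ Real.log ((k : ℝ)⁻¹ * ∑ ℓ ∈ Finset.range k, U ℓ ω) := by
    intro ω
    have hw0 : ∀ i ∈ Finset.range (q + r), 0 ≤ w i := by
      intro i _
      simp only [hw]
      split <;> positivity
    have hw1 : ∑ i ∈ Finset.range (q + r), w i = 1 := by
      rw [Finset.sum_range_add]
      have e1 : ∀ i ∈ Finset.range q, w i = (m : ℝ) / k := by
        intro i hi
        simp only [hw, if_pos (Finset.mem_range.mp hi)]
      have e2 : ∀ j ∈ Finset.range r, w (q + j) = 1 / k := by
        intro j _
        simp only [hw, if_neg (by omega : ¬ q + j < q)]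
      rw [Finset.sum_congr rfl e1, Finset.sum_congr rfl e2, Finset.sum_const,
        Finset.sum_const, Finset.card_range, Finset.card_range]
      have : (q : ℝ) * m + r = k := by
        have := hqr
        push_cast [← this]
        ring
      rw [nsmul_eq_mul, nsmul_eq_mul]
      field_simp
      linarith [this]
    have hmem : ∀ i ∈ Finset.range (q + r), B i ω ∈ Set.Ioi (0 : ℝ) := by
      intro i _
      simp only [hB, Set.mem_Ioi]
      split
      · exact mul_pos (by positivity)
          (Finset.sum_pos (fun ℓ _ => hUpos _ ω)
            (Finset.nonempty_range_iff.mpr (by omega)))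
      · exact hUpos _ ω
    have hjen := (strictConcaveOn_log_Ioi.concaveOn).le_map_sum hw0 hw1 hmem
      (t := Finset.range (q + r)) (p := fun i => B i ω)
    simp only [smul_eq_mul] at hjen
    have hsum : ∑ i ∈ Finset.range (q + r), w i * B i ω
        = (k : ℝ)⁻¹ * ∑ ℓ ∈ Finset.range k, U ℓ ω := by
      rw [Finset.sum_range_add]
      have e1 : ∀ i ∈ Finset.range q, w i * B i ω
          = (k : ℝ)⁻¹ * ∑ ℓ ∈ Finset.range m, U (m * i + ℓ) ω := by
        intro i hi
        have hi' := Finset.mem_range.mp hi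
        simp only [hw, hB, if_pos hi']
        field_simp
      have e2 : ∀ j ∈ Finset.range r, w (q + j) * B (q + j) ω
          = (k : ℝ)⁻¹ * U (m * q + j) ω := by
        intro j _
        simp only [hw, hB, if_neg (by omega : ¬ q + j < q)]
        rw [Nat.add_sub_cancel_left]
        rw [one_div]
      rw [Finset.sum_congr rfl e1, Finset.sum_congr rfl e2,
        ← Finset.mul_sum, ← Finset.mul_sum, ← mul_add]
      congr 1
      rw [← hqr, Finset.sum_range_add, blockaux_sum_range_mul (fun n => U n ω) m q]
    rw [hsum] at hjen
    exact hjen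
  -- integrability of each term
  have hBint : ∀ i, Integrable (fun ω => Real.log (B i ω)) P := by
    intro i
    by_cases hi : i < q
    · simp only [hB, if_pos hi]
      exact hblockIntble i
    · simp only [hB, if_neg hi]
      exact hlogℓ _
  have hLHSint : Integrable
      (fun ω => ∑ i ∈ Finset.range (q + r), w i * Real.log (B i ω)) P :=
    integrable_finset_sum _ fun i _ => (hBint i).const_mul _
  have hRHSint : Integrable
      (fun ω => Real.log ((k : ℝ)⁻¹ * ∑ ℓ ∈ Finset.range k, U ℓ ω)) P :=
    blockaux_integrable_log_avg P k hk U hUmeas hUpos hUint' hlog0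
  -- integrate the pointwise inequality
  have hmono := integral_mono hLHSint hRHSint hpoint
  -- compute the left integral
  have hcalc : ∫ ω, ∑ i ∈ Finset.range (q + r), w i * Real.log (B i ω) ∂P
      = (q : ℝ) * ((m : ℝ) / k * ∫ ω, Real.log ((m : ℝ)⁻¹ * ∑ ℓ ∈ Finset.range m, U ℓ ω) ∂P)
        + (r : ℝ) * ((1 : ℝ) / k * ∫ ω, Real.log (U 0 ω) ∂P) := by
    rw [integral_finset_sum _ fun i _ => (hBint i).const_mul _]
    simp only [integral_const_mul]
    rw [Finset.sum_range_add]
    have e1 : ∀ i ∈ Finset.range q,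
        w i * ∫ ω, Real.log (B i ω) ∂P
          = (m : ℝ) / k * ∫ ω, Real.log ((m : ℝ)⁻¹ * ∑ ℓ ∈ Finset.range m, U ℓ ω) ∂P := by
      intro i hi
      have hi' := Finset.mem_range.mp hi
      simp only [hw, hB, if_pos hi']
      rw [hblockInt i]
    have e2 : ∀ j ∈ Finset.range r,
        w (q + j) * ∫ ω, Real.log (B (q + j) ω) ∂P
          = (1 : ℝ) / k * ∫ ω, Real.log (U 0 ω) ∂P := by
      intro j _
      simp only [hw, hB, if_neg (by omega : ¬ q + j < q)]
      rw [hElog]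
    rw [Finset.sum_congr rfl e1, Finset.sum_congr rfl e2, Finset.sum_const,
      Finset.sum_const, Finset.card_range, Finset.card_range, nsmul_eq_mul, nsmul_eq_mul]
  rw [hcalc] at hmono
  refine le_trans (le_of_eq ?_) hmono
  have hcast : ((m * (k / m) : ℕ) : ℝ) = (m : ℝ) * (q : ℝ) := by
    push_cast [hq]
    ring
  have hcast2 : ((k % m : ℕ) : ℝ) = (r : ℝ) := by rw [hr]
  rw [hcast, hcast2]
  field_simp
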